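/- Let δ ∈ (0, 1], let J₁ and J₂ be disjoint intervals of ℝ of lengths 1−δ and 1 respectively, and let μ be the measure with constant density 1/(2−δ) on J₁ ∪ J₂ and 0 elsewhere (so μ is a probability measure). Then for every measurable function s : ℝ → {−1, +1} that is constant on J₂, it holds that |∫ s dμ| ≥ δ/2. -/

import Mathlib

open MeasureTheory

theorem stmt_14 (δ a b : ℝ) (hδ0 : 0 < δ) (hδ1 : δ ≤ 1)
    (J₁ J₂ : Set ℝ) (hJ₁ : J₁ = Set.Icc a (a + (1 - δ)))
    (hJ₂ : J₂ = Set.Icc b (b + 1)) (hdisj : Disjoint J₁ J₂)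
    (μ : Measure ℝ)
    (hμ : μ = volume.withDensity
      ((J₁ ∪ J₂).indicator (fun _ => ENNReal.ofReal (1 / (2 - δ)))))
    (s : ℝ → ℝ) (hs : Measurable s) (hs1 : ∀ x, s x = 1 ∨ s x = -1)
    (hconst : ∀ x ∈ J₂, ∀ y ∈ J₂, s x = s y) :
    δ / 2 ≤ |∫ x, s x ∂μ| := by
  have h2δ : (0:ℝ) < 2 - δ := by linarith
  set c : ℝ := 1 / (2 - δ) with hc_def
  have hc0 : 0 < c := by positivity
  have hm1 : MeasurableSet J₁ := by rw [hJ₁]; exact measurableSet_Icc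
  have hm2 : MeasurableSet J₂ := by rw [hJ₂]; exact measurableSet_Icc
  have hmU : MeasurableSet (J₁ ∪ J₂) := hm1.union hm2
  -- rewrite μ as a scaled restriction
  have hμ' : μ = (ENNReal.ofReal c) • (volume.restrict (J₁ ∪ J₂)) := by
    rw [hμ, withDensity_indicator hmU, withDensity_const]
  have hμint : ∫ x, s x ∂μ = c * ∫ x in J₁ ∪ J₂, s x := by
    rw [hμ', integral_smul_measure, ENNReal.toReal_ofReal hc0.le, smul_eq_mul]
  -- integrability
  have hbound : ∀ x, ‖s x‖ ≤ 1 := by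
    intro x
    rcases hs1 x with h | h <;> rw [h] <;> simp
  have hint : ∀ (t : Set ℝ), MeasurableSet t → volume t < ⊤ → IntegrableOn s t := by
    intro t ht hft
    refine Integrable.mono' (g := fun _ => (1:ℝ)) (integrableOn_const hft.ne) hs.aestronglyMeasurable ?_
    exact Filter.Eventually.of_forall hbound
  have hv1 : volume J₁ < ⊤ := by rw [hJ₁]; exact measure_Icc_lt_top
  have hv2 : volume J₂ < ⊤ := by rw [hJ₂]; exact measure_Icc_lt_top
  have hint1 : IntegrableOn s J₁ := hint J₁ hm1 hv1
  have hint2 : IntegrableOn s J₂ := hint J₂ hm2 hv2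
  have hsplit : ∫ x in J₁ ∪ J₂, s x = (∫ x in J₁, s x) + ∫ x in J₂, s x :=
    setIntegral_union hdisj hm2 hint1 hint2
  -- integral over J₂
  have hbmem : b ∈ J₂ := by rw [hJ₂]; constructor <;> linarith
  set v : ℝ := s b with hv_def
  have hI2 : ∫ x in J₂, s x = v := by
    have : ∫ x in J₂, s x = ∫ _x in J₂, v := by
      refine setIntegral_congr_fun hm2 ?_
      intro x hx
      exact hconst x hx b hbmem
    rw [this, setIntegral_const, hJ₂, measureReal_def, Real.volume_Icc, smul_eq_mul]
    rw [show b + 1 - b = 1 by ring, ENNReal.toReal_ofReal (by norm_num)]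
    ring
  have hvabs : |v| = 1 := by
    rcases hs1 b with h | h <;> rw [hv_def, h] <;> simp
  -- bound integral over J₁
  have hI1 : |∫ x in J₁, s x| ≤ 1 - δ := by
    have := norm_setIntegral_le_of_norm_le_const (C := 1) (s := J₁)
      hv1 (fun x _ => hbound x) (f := s) (μ := volume)
    rw [Real.norm_eq_abs] at this
    calc |∫ x in J₁, s x| ≤ 1 * (volume J₁).toReal := this
    _ = 1 - δ := by
        rw [hJ₁, Real.volume_Icc, show a + (1 - δ) - a = 1 - δ by ring,
          ENNReal.toReal_ofReal (by linarith)]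
        ring
  -- finish
  rw [hμint, hsplit, hI2, abs_mul, abs_of_pos hc0]
  have habs : δ ≤ |(∫ x in J₁, s x) + v| := by
    have h1 : |v| - |∫ x in J₁, s x| ≤ |(∫ x in J₁, s x) + v| := by
      have := abs_sub_abs_le_abs_sub v (-(∫ x in J₁, s x))
      simp only [abs_neg, sub_neg_eq_add] at this
      rw [add_comm]
      linarith
    rw [hvabs] at h1
    linarith
  have hchalf : 1 / 2 ≤ c := by
    rw [hc_def]
    rw [div_le_div_iff₀ (by norm_num) h2δ]
    linarith
  calc δ / 2 = (1/2) * δ := by ring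
  _ ≤ c * δ := by nlinarith
  _ ≤ c * |(∫ x in J₁, s x) + v| := by nlinarith
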